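/- For every N > 0 and every a ∈ ℝ, the Kullback–Leibler divergence from the Gaussian density q_a to the binary mixture q̃ satisfies ∫_ℝ q_a(z)·log(q_a(z)/q̃(z)) dz ≤ a²/N. -/
import Mathlib


open MeasureTheory

/-- Density of the Gaussian distribution with mean `0` and variance `N/2`. -/
noncomputable def q0 (N z : ℝ) : ℝ := (Real.sqrt (Real.pi * N))⁻¹ * Real.exp (-z ^ 2 / N)

/-- Density of the Gaussian distribution with mean `a` and variance `N/2`. -/
noncomputable def qa (N a z : ℝ) : ℝ := (Real.sqrt (Real.pi * N))⁻¹ * Real.exp (-(z - a) ^ 2 / N)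

/-- The binary mixture density `½ q_a + ½ q_{-a}`. -/
noncomputable def qmix (N a z : ℝ) : ℝ := (1 / 2) * qa N a z + (1 / 2) * qa N (-a) z

/-- The log-likelihood ratio `log (q̃(z)/q₀(z))`. -/
noncomputable def llr (N a z : ℝ) : ℝ := Real.log (qmix N a z / q0 N z)

section Aux

variable {N a : ℝ}

lemma sqrt_piN_pos (hN : 0 < N) : 0 < Real.sqrt (Real.pi * N) :=
  Real.sqrt_pos.mpr (by positivity)

lemma qa_pos (hN : 0 < N) (z : ℝ) : 0 < qa N a z := by
  unfold qa
  have := sqrt_piN_pos hN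
  positivity

lemma q0_pos (hN : 0 < N) (z : ℝ) : 0 < q0 N z := by
  unfold q0
  have := sqrt_piN_pos hN
  positivity

lemma qmix_pos (hN : 0 < N) (z : ℝ) : 0 < qmix N a z := by
  unfold qmix
  have h1 := qa_pos (a := a) hN z
  have h2 := qa_pos (a := -a) hN z
  linarith

lemma qa_neg_arg (z : ℝ) : qa N a (-z) = qa N (-a) z := by
  unfold qa
  congr 1
  congr 1
  ring

lemma q0_neg_arg (z : ℝ) : q0 N (-z) = q0 N z := by
  unfold q0
  rw [neg_sq]

lemma qmix_neg_arg (z : ℝ) : qmix N a (-z) = qmix N a z := by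
  unfold qmix
  rw [qa_neg_arg, qa_neg_arg, neg_neg, add_comm]

lemma llr_neg_arg (z : ℝ) : _root_.llr N a (-z) = _root_.llr N a z := by
  unfold _root_.llr
  rw [qmix_neg_arg, q0_neg_arg]

lemma qa_eq_comp (N a : ℝ) : qa N a
    = fun z => (fun x : ℝ => (Real.sqrt (Real.pi * N))⁻¹ * Real.exp (-(1/N) * x ^ 2)) (z - a) := by
  funext z
  unfold qa
  ring_nf

lemma integrable_qa (hN : 0 < N) : Integrable (qa N a) := by
  rw [qa_eq_comp]
  exact ((integrable_exp_neg_mul_sq (by positivity)).const_mul _).comp_sub_right a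

lemma integral_qa (hN : 0 < N) : ∫ z : ℝ, qa N a z = 1 := by
  rw [qa_eq_comp, integral_sub_right_eq_self
    (fun x : ℝ => (Real.sqrt (Real.pi * N))⁻¹ * Real.exp (-(1/N) * x ^ 2)) a,
    MeasureTheory.integral_const_mul, integral_gaussian]
  have h : Real.pi / (1/N) = Real.pi * N := by field_simp
  rw [h, inv_mul_cancel₀ (sqrt_piN_pos hN).ne']

lemma id_mul_qa_eq_comp (N a : ℝ) : (fun z : ℝ => z * qa N a z)
    = fun z => (fun x : ℝ => (x + a) * ((Real.sqrt (Real.pi * N))⁻¹ * Real.exp (-(1/N) * x ^ 2))) (z - a) := by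
  funext z
  unfold qa
  ring_nf

lemma integrable_aux_shift (hN : 0 < N) :
    Integrable (fun x : ℝ => (x + a) * ((Real.sqrt (Real.pi * N))⁻¹ * Real.exp (-(1/N) * x ^ 2))) := by
  have h : (fun x : ℝ => (x + a) * ((Real.sqrt (Real.pi * N))⁻¹ * Real.exp (-(1/N) * x ^ 2)))
      = fun x => (Real.sqrt (Real.pi * N))⁻¹ * (x * Real.exp (-(1/N) * x ^ 2))
        + (a * (Real.sqrt (Real.pi * N))⁻¹) * Real.exp (-(1/N) * x ^ 2) := by
    funext x; ring
  rw [h]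
  exact ((integrable_mul_exp_neg_mul_sq (by positivity)).const_mul _).add
    ((integrable_exp_neg_mul_sq (by positivity)).const_mul _)

lemma integrable_id_mul_qa (hN : 0 < N) : Integrable (fun z : ℝ => z * qa N a z) := by
  rw [id_mul_qa_eq_comp]
  exact (integrable_aux_shift hN).comp_sub_right a

lemma integral_mul_exp_gauss (b : ℝ) : ∫ x : ℝ, x * Real.exp (-b * x ^ 2) = 0 := by
  have h := MeasureTheory.integral_neg_eq_self (fun x : ℝ => x * Real.exp (-b * x ^ 2)) volume
  simp only [neg_neg, neg_sq, neg_mul] at h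
  rw [integral_neg] at h
  simp only [neg_mul] at h ⊢
  linarith

lemma integral_id_mul_qa (hN : 0 < N) : ∫ z : ℝ, z * qa N a z = a := by
  rw [id_mul_qa_eq_comp, integral_sub_right_eq_self
    (fun x : ℝ => (x + a) * ((Real.sqrt (Real.pi * N))⁻¹ * Real.exp (-(1/N) * x ^ 2))) a]
  have h : (fun x : ℝ => (x + a) * ((Real.sqrt (Real.pi * N))⁻¹ * Real.exp (-(1/N) * x ^ 2)))
      = fun x => (Real.sqrt (Real.pi * N))⁻¹ * (x * Real.exp (-(1/N) * x ^ 2))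
        + (a * (Real.sqrt (Real.pi * N))⁻¹) * Real.exp (-(1/N) * x ^ 2) := by
    funext x; ring
  rw [h, integral_add (((integrable_mul_exp_neg_mul_sq (by positivity)).const_mul _))
    ((integrable_exp_neg_mul_sq (by positivity)).const_mul _),
    MeasureTheory.integral_const_mul, MeasureTheory.integral_const_mul,
    integral_mul_exp_gauss, integral_gaussian]
  have h2 : Real.pi / (1/N) = Real.pi * N := by field_simp
  rw [h2]
  rw [mul_zero, zero_add, mul_assoc, inv_mul_cancel₀ (sqrt_piN_pos hN).ne', mul_one]

lemma qa_div_q0 (hN : 0 < N) (z : ℝ) :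
    qa N a z / q0 N z = Real.exp ((2*a*z - a^2)/N) := by
  unfold qa q0
  rw [mul_div_mul_left _ _ (inv_ne_zero (sqrt_piN_pos hN).ne'), ← Real.exp_sub]
  congr 1
  field_simp
  ring

lemma qmix_div_q0 (hN : 0 < N) (z : ℝ) :
    qmix N a z / q0 N z = Real.exp (-(a^2)/N) * Real.cosh (2*a*z/N) := by
  have h1 := qa_div_q0 (a := a) hN z
  have h2 := qa_div_q0 (a := -a) hN z
  have h3 : qmix N a z / q0 N z
      = (1/2) * (qa N a z / q0 N z) + (1/2) * (qa N (-a) z / q0 N z) := by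
    unfold qmix; ring
  rw [h3, h1, h2, Real.cosh_eq,
    show (2 * -a * z - (-a)^2)/N = -(a^2)/N + -(2*a*z/N) by ring,
    show (2*a*z - a^2)/N = -(a^2)/N + 2*a*z/N by ring,
    Real.exp_add, Real.exp_add]
  ring

lemma llr_eq (hN : 0 < N) (z : ℝ) :
    _root_.llr N a z = -(a ^ 2 / N) + Real.log (Real.cosh (2*a*z/N)) := by
  unfold _root_.llr
  rw [qmix_div_q0 hN, Real.log_mul (Real.exp_ne_zero _) (Real.cosh_pos _).ne', Real.log_exp,
    neg_div]

lemma cosh_le_exp_abs (x : ℝ) : Real.cosh x ≤ Real.exp |x| := by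
  rw [Real.cosh_eq]
  have h1 : Real.exp x ≤ Real.exp |x| := Real.exp_le_exp.mpr (le_abs_self x)
  have h2 : Real.exp (-x) ≤ Real.exp |x| := Real.exp_le_exp.mpr (neg_le_abs x)
  linarith

lemma log_cosh_nonneg (x : ℝ) : 0 ≤ Real.log (Real.cosh x) :=
  Real.log_nonneg (Real.one_le_cosh x)

lemma log_cosh_le_abs (x : ℝ) : Real.log (Real.cosh x) ≤ |x| := by
  calc Real.log (Real.cosh x) ≤ Real.log (Real.exp |x|) :=
        Real.log_le_log (Real.cosh_pos _) (cosh_le_exp_abs x)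
    _ = |x| := Real.log_exp _

lemma abs_llr_le (hN : 0 < N) (z : ℝ) :
    |_root_.llr N a z| ≤ a ^ 2 / N + 2 * |a| * |z| / N := by
  rw [llr_eq hN]
  have h0 := log_cosh_nonneg (2*a*z/N)
  have h1 := log_cosh_le_abs (2*a*z/N)
  have h2 : |2*a*z/N| = 2 * |a| * |z| / N := by
    rw [abs_div, abs_of_pos hN, abs_mul, abs_mul]
    norm_num
  rw [h2] at h1
  have ha2 : 0 ≤ a ^ 2 / N := by positivity
  have ht : 0 ≤ 2 * |a| * |z| / N := by positivity
  rw [abs_le]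
  constructor <;> linarith

lemma continuous_qa (N b : ℝ) : Continuous (qa N b) := by
  unfold qa
  fun_prop

lemma continuous_llr (hN : 0 < N) : Continuous (_root_.llr N a) := by
  have hqmix : Continuous (qmix N a) := by
    unfold qmix
    exact (continuous_const.mul (continuous_qa N a)).add
      (continuous_const.mul (continuous_qa N (-a)))
  have hq0 : Continuous (q0 N) := by
    unfold q0
    fun_prop
  unfold _root_.llr
  exact (hqmix.div hq0 fun z => (q0_pos hN z).ne').log
    fun z => (div_pos (qmix_pos hN z) (q0_pos hN z)).ne'

lemma integrable_qa_mul_llr (hN : 0 < N) (b : ℝ) :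
    Integrable (fun z : ℝ => qa N b z * _root_.llr N a z) := by
  have hbound : Integrable (fun z : ℝ =>
      (a ^ 2 / N) * qa N b z + (2 * |a| / N) * |z * qa N b z|) :=
    ((integrable_qa hN).const_mul _).add ((integrable_id_mul_qa hN).abs.const_mul _)
  refine hbound.mono' ((continuous_qa N b).mul (continuous_llr hN)).aestronglyMeasurable
    (Filter.Eventually.of_forall fun z => ?_)
  have hq := qa_pos (a := b) hN z
  have habs : |z * qa N b z| = |z| * qa N b z := by
    rw [abs_mul, abs_of_pos hq]
  rw [Real.norm_eq_abs, abs_mul, abs_of_pos hq, habs]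
  have hl := abs_llr_le (a := a) hN z
  calc qa N b z * |_root_.llr N a z|
      ≤ qa N b z * (a ^ 2 / N + 2 * |a| * |z| / N) :=
        mul_le_mul_of_nonneg_left hl hq.le
    _ = a ^ 2 / N * qa N b z + 2 * |a| / N * (|z| * qa N b z) := by ring

lemma integral_qa_neg_llr (hN : 0 < N) :
    ∫ z : ℝ, qa N (-a) z * _root_.llr N a z = ∫ z : ℝ, qa N a z * _root_.llr N a z := by
  have h := MeasureTheory.integral_neg_eq_self
    (fun z : ℝ => qa N a z * _root_.llr N a z) volume
  have h2 : (fun z : ℝ => qa N a (-z) * _root_.llr N a (-z))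
      = fun z : ℝ => qa N (-a) z * _root_.llr N a z := by
    funext z
    rw [qa_neg_arg, llr_neg_arg]
  rw [← h2]
  exact h

lemma integrable_qmix_mul_llr (hN : 0 < N) :
    Integrable (fun z : ℝ => qmix N a z * _root_.llr N a z) := by
  have hrw : (fun z : ℝ => qmix N a z * _root_.llr N a z)
      = fun z : ℝ => (1/2) * (qa N a z * _root_.llr N a z)
        + (1/2) * (qa N (-a) z * _root_.llr N a z) := by
    funext z; unfold qmix; ring
  rw [hrw]
  exact ((integrable_qa_mul_llr hN a).const_mul _).add
    ((integrable_qa_mul_llr hN (-a)).const_mul _)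

lemma integral_qmix_llr_eq (hN : 0 < N) :
    ∫ z : ℝ, qmix N a z * _root_.llr N a z = ∫ z : ℝ, qa N a z * _root_.llr N a z := by
  have hrw : (fun z : ℝ => qmix N a z * _root_.llr N a z)
      = fun z : ℝ => (1/2) * (qa N a z * _root_.llr N a z)
        + (1/2) * (qa N (-a) z * _root_.llr N a z) := by
    funext z; unfold qmix; ring
  rw [hrw, integral_add ((integrable_qa_mul_llr hN a).const_mul _)
    ((integrable_qa_mul_llr hN (-a)).const_mul _),
    MeasureTheory.integral_const_mul, MeasureTheory.integral_const_mul,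
    integral_qa_neg_llr hN]
  ring

lemma q0_eq_qa (N : ℝ) : q0 N = qa N 0 := by
  funext z
  unfold q0 qa
  rw [sub_zero]

lemma integrable_qmix (hN : 0 < N) : Integrable (qmix N a) := by
  unfold qmix
  exact ((integrable_qa hN).const_mul _).add ((integrable_qa hN).const_mul _)

lemma integral_qmix (hN : 0 < N) : ∫ z : ℝ, qmix N a z = 1 := by
  unfold qmix
  rw [integral_add ((integrable_qa hN).const_mul _) ((integrable_qa hN).const_mul _),
    MeasureTheory.integral_const_mul, MeasureTheory.integral_const_mul,
    integral_qa hN, integral_qa hN]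
  norm_num

lemma integral_qmix_llr_nonneg (hN : 0 < N) :
    0 ≤ ∫ z : ℝ, qmix N a z * _root_.llr N a z := by
  have hpt : ∀ z : ℝ, qmix N a z - q0 N z ≤ qmix N a z * _root_.llr N a z := by
    intro z
    have hq0 := q0_pos hN z
    have hqm := qmix_pos (a := a) hN z
    have hlog : Real.log (q0 N z / qmix N a z) ≤ q0 N z / qmix N a z - 1 :=
      Real.log_le_sub_one_of_pos (div_pos hq0 hqm)
    have hinv : _root_.llr N a z = - Real.log (q0 N z / qmix N a z) := by
      unfold _root_.llr
      rw [← Real.log_inv]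
      congr 1
      rw [inv_div]
    rw [hinv]
    have h2 : qmix N a z * (q0 N z / qmix N a z - 1) = q0 N z - qmix N a z := by
      field_simp
    nlinarith
  have hsub : Integrable (fun z : ℝ => qmix N a z - q0 N z) := by
    have : Integrable (q0 N) := by rw [q0_eq_qa]; exact integrable_qa hN
    exact (integrable_qmix hN).sub this
  have hmono := integral_mono hsub (integrable_qmix_mul_llr hN) hpt
  have hval : ∫ z : ℝ, (qmix N a z - q0 N z) = 0 := by
    have hq0int : Integrable (q0 N) := by rw [q0_eq_qa]; exact integrable_qa hN
    rw [integral_sub (integrable_qmix hN) hq0int, integral_qmix hN, q0_eq_qa, integral_qa hN]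
    ring
  rw [hval] at hmono
  exact hmono

end Aux

/-- The KL divergence from the Gaussian `q_a` to the binary mixture `q̃` is at most `a²/N`. -/
theorem kl_qa_qmix_le (N a : ℝ) (hN : 0 < N) :
    (∫ z : ℝ, qa N a z * Real.log (qa N a z / qmix N a z)) ≤ a ^ 2 / N := by
  have hpt : (fun z : ℝ => qa N a z * Real.log (qa N a z / qmix N a z))
      = fun z : ℝ => (2*a/N * (z * qa N a z) + (-(a^2)/N) * qa N a z)
        - qa N a z * _root_.llr N a z := by
    funext z
    have hq0 := q0_pos hN z
    have hqm := qmix_pos (a := a) hN z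
    have hqa := qa_pos (a := a) hN z
    have h4 : Real.log (qa N a z) - Real.log (q0 N z) = (2*a*z - a^2)/N := by
      rw [← Real.log_div hqa.ne' hq0.ne', qa_div_q0 hN, Real.log_exp]
    have h5 : _root_.llr N a z = Real.log (qmix N a z) - Real.log (q0 N z) := by
      unfold _root_.llr
      rw [Real.log_div hqm.ne' hq0.ne']
    have hlog : Real.log (qa N a z / qmix N a z)
        = (2*a*z - a^2)/N - _root_.llr N a z := by
      rw [Real.log_div hqa.ne' hqm.ne', h5, ← h4]
      ring
    rw [hlog]
    field_simp
    ring
  have hintf : Integrable (fun z : ℝ => 2*a/N * (z * qa N a z) + (-(a^2)/N) * qa N a z) :=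
    ((integrable_id_mul_qa hN).const_mul _).add ((integrable_qa hN).const_mul _)
  rw [hpt, integral_sub hintf (integrable_qa_mul_llr hN a),
    integral_add ((integrable_id_mul_qa hN).const_mul _) ((integrable_qa hN).const_mul _),
    MeasureTheory.integral_const_mul, MeasureTheory.integral_const_mul,
    integral_id_mul_qa hN, integral_qa hN]
  have h1 : 2*a/N * a + (-(a^2)/N) * 1 = a ^ 2 / N := by
    field_simp
    ring
  rw [h1]
  have h2 := integral_qmix_llr_nonneg (a := a) hN
  rw [integral_qmix_llr_eq hN] at h2
  linarith
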